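/- arXiv:2102.11681 — 4 statements merged into one kernel-verified Lean document; each statement's English description precedes it below -/
import Mathlib

section
/- Let p > q ≥ 0, d, m ≥ 1 be integers, A(λ) = I_d λ^p + A_1 λ^{p−1} + … + A_p a monic λ-matrix with A_1,…,A_p ∈ ℂ^{d×d}, and B(λ) = B_0 λ^q + … + B_q with B_0,…,B_q ∈ ℂ^{d×m}. Suppose R_1,…,R_p ∈ ℂ^{d×d} are right solvents of A(λ) (i.e. R_k^p + A_1 R_k^{p−1} + … + A_{p−1} R_k + A_p = 0 for each k) and the block Vandermonde matrix V(R_1,…,R_p) is invertible. Define G_1,…,G_p ∈ ℂ^{d×m} by stacking (G_1^T,…,G_p^T)^T = V(R_1,…,R_p)^{−1} B^*. Then for every t ∈ ℝ, C^* exp(t A^*) B^* = Σ_{k=1}^p exp(t R_k) G_k, where exp denotes the matrix exponential. -/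
open Matrix

abbrev Mat (d e : ℕ) := Matrix (Fin d) (Fin e) ℂ

/-- The block Vandermonde matrix: the `(i,j)`-th `d×d` block is `R j ^ i` (0-indexed). -/
def vand (p d : ℕ) (R : Fin p → Mat d d) : Matrix (Fin p × Fin d) (Fin p × Fin d) ℂ :=
  fun x y => (R y.1 ^ (x.1 : ℕ)) x.2 y.2

/-- The companion matrix `A^*` of the monic λ-matrix `I_d λ^p + A_1 λ^{p-1} + … + A_p`,
where `A i` denotes `A_{i+1}`. -/
def companion (p d : ℕ) (A : Fin p → Mat d d) : Matrix (Fin p × Fin d) (Fin p × Fin d) ℂ :=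
  fun x y =>
    if (x.1 : ℕ) + 1 = p then (-(A y.1.rev)) x.2 y.2
    else if (y.1 : ℕ) = (x.1 : ℕ) + 1 then (1 : Mat d d) x.2 y.2 else 0

/-- `C^* = (I_d, 0, …, 0)`. -/
def Cstar (p d : ℕ) : Matrix (Fin d) (Fin p × Fin d) ℂ :=
  fun a y => if (y.1 : ℕ) = 0 then (1 : Mat d d) a y.2 else 0

/-- The stacked matrix `B^* = (β_1^T, …, β_p^T)^T`, where `β i = β_{i+1}`. -/
def Bstar (p d m : ℕ) (β : Fin p → Mat d m) : Matrix (Fin p × Fin d) (Fin m) ℂ :=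
  fun x c => β x.1 x.2 c

/-- `R` is a right solvent of `I_d λ^p + A_1 λ^{p-1} + … + A_p`, where `A i = A_{i+1}`. -/
def IsRightSolvent (p d : ℕ) (A : Fin p → Mat d d) (R : Mat d d) : Prop :=
  R ^ p + ∑ i : Fin p, A i * R ^ (p - 1 - (i : ℕ)) = 0


open NormedSpace in
lemma exp_reindex_aux {n n' : Type*} [Fintype n] [DecidableEq n] [Fintype n'] [DecidableEq n']
    (e : n ≃ n') (M : Matrix n n ℂ) :
    exp ((Matrix.reindex e e) M) = (Matrix.reindex e e) (exp M) := by
  letI : SeminormedRing (Matrix n n ℂ) := Matrix.linftyOpSemiNormedRing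
  letI : NormedRing (Matrix n n ℂ) := Matrix.linftyOpNormedRing
  letI : NormedAlgebra ℂ (Matrix n n ℂ) := Matrix.linftyOpNormedAlgebra
  letI : SeminormedRing (Matrix n' n' ℂ) := Matrix.linftyOpSemiNormedRing
  letI : NormedRing (Matrix n' n' ℂ) := Matrix.linftyOpNormedRing
  letI : NormedAlgebra ℂ (Matrix n' n' ℂ) := Matrix.linftyOpNormedAlgebra
  letI : NormedAlgebra ℚ (Matrix n n ℂ) := NormedAlgebra.restrictScalars ℚ ℂ _
  have hc : Continuous (Matrix.reindexAlgEquiv ℂ ℂ e) :=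
    (Matrix.reindexAlgEquiv ℂ ℂ e).toLinearMap.continuous_of_finiteDimensional
  exact (map_exp (Matrix.reindexAlgEquiv ℂ ℂ e : Matrix n n ℂ →+* Matrix n' n' ℂ) hc M).symm

theorem stmt_0 (p q d m : ℕ) (hq : q < p) (hd : 0 < d) (hm : 0 < m)
    (A : Fin p → Mat d d) (B : Fin (q + 1) → Mat d m)
    -- `β` is the block entries of `B^*`: `β_1 = … = β_{p-q-1} = 0` and
    -- `β_{p-j} = -∑_{i=1}^{p-j-1} A_i β_{p-j-i} + B_{q-j}` for `j = 0,…,q`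
    (β : Fin p → Mat d m)
    (hβ0 : ∀ k : Fin p, (k : ℕ) < p - q - 1 → β k = 0)
    (hβrec : ∀ j : ℕ, j ≤ q →
      β ⟨p - 1 - j, by omega⟩ =
        -(∑ i : Fin (p - 1 - j), A ⟨(i : ℕ), by have := i.isLt; omega⟩ *
            β ⟨p - 1 - j - ((i : ℕ) + 1), by omega⟩) + B ⟨q - j, by omega⟩)
    (R : Fin p → Mat d d) (hR : ∀ k, IsRightSolvent p d A (R k))
    (hV : IsUnit (vand p d R))
    -- `G` is defined by stacking: `(G_1^T,…,G_p^T)^T = V(R_1,…,R_p)⁻¹ B^*`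
    (G : Fin p → Mat d m)
    (hG : ∀ (k : Fin p) (a : Fin d) (c : Fin m),
      G k a c = ((vand p d R)⁻¹ * Bstar p d m β) (k, a) c) :
    ∀ t : ℝ,
      Cstar p d * NormedSpace.exp ((t : ℂ) • companion p d A) * Bstar p d m β =
        ∑ k : Fin p, NormedSpace.exp ((t : ℂ) • R k) * G k := by
  intro t
  classical
  have hp : 0 < p := hq.trans_le' (Nat.zero_le q) |>.trans_le (le_refl p) |>.trans_le (le_refl p)
  set V := vand p d R with hVdef
  set e : (Fin d × Fin p) ≃ (Fin p × Fin d) := Equiv.prodComm _ _ with he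
  set D : Matrix (Fin p × Fin d) (Fin p × Fin d) ℂ :=
    (Matrix.reindex e e) (Matrix.blockDiagonal R) with hD
  have hDentry : ∀ x y : Fin p × Fin d,
      D x y = if x.1 = y.1 then R y.1 x.2 y.2 else 0 := by
    rintro ⟨i, a⟩ ⟨j, b⟩
    simp only [hD, Matrix.reindex_apply, Matrix.submatrix_apply, he, Equiv.prodComm_symm,
      Equiv.prodComm_apply, Prod.swap_prod_mk, Matrix.blockDiagonal_apply]
    by_cases h : i = j <;> simp [h]
  -- key intertwining identity
  have key : companion p d A * V = V * D := by
    ext x y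
    obtain ⟨i, a⟩ := x
    obtain ⟨j, b⟩ := y
    have hRHS : (V * D) (i, a) (j, b) = (R j ^ ((i : ℕ) + 1)) a b := by
      rw [Matrix.mul_apply, Fintype.sum_prod_type]
      have : ∀ k : Fin p, ∑ c : Fin d, V (i, a) (k, c) * D (k, c) (j, b) =
          if k = j then (R j ^ ((i : ℕ) + 1)) a b else 0 := by
        intro k
        by_cases h : k = j
        · subst h
          simp only [hDentry, if_pos rfl]
          rw [pow_succ, Matrix.mul_apply]
          simp [hVdef, vand]
        · simp [hDentry, h]
      rw [Finset.sum_congr rfl fun k _ => this k]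
      simp
    rw [hRHS, Matrix.mul_apply, Fintype.sum_prod_type]
    by_cases h : (i : ℕ) + 1 = p
    · -- last block row
      have hsolv := hR j
      have hsum : ∑ k : Fin p, A k.rev * R j ^ (k : ℕ) = -(R j ^ p) := by
        have h1 : ∑ k : Fin p, A k.rev * R j ^ (k : ℕ) =
            ∑ k : Fin p, A k * R j ^ (p - 1 - (k : ℕ)) := by
          refine Fintype.sum_equiv (Fin.revPerm) _ _ fun k => ?_
          simp only [Fin.revPerm_apply, Fin.rev_rev]
          congr 1
          congr 1
          rw [Fin.val_rev]
          omega
        rw [h1]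
        have := hsolv
        unfold IsRightSolvent at this
        linear_combination (norm := abel) this - (R j ^ p + ∑ i : Fin p, A i * R j ^ (p - 1 - (i:ℕ))) + (∑ i : Fin p, A i * R j ^ (p - 1 - (i:ℕ)))
      have : ∀ k : Fin p, ∑ c : Fin d, companion p d A (i, a) (k, c) * V (k, c) (j, b) =
          (-(A k.rev * R j ^ (k : ℕ))) a b := by
        intro k
        simp only [companion, if_pos h, hVdef, vand, Matrix.neg_apply,
          Matrix.mul_apply, ← Finset.sum_neg_distrib, neg_mul]
      rw [Finset.sum_congr rfl fun k _ => this k]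
      rw [← Matrix.sum_apply]
      have : ∑ k : Fin p, -(A k.rev * R j ^ (k : ℕ)) = R j ^ p := by
        rw [Finset.sum_neg_distrib, hsum, neg_neg]
      rw [this, h]
    · -- interior rows
      have hi1 : (i : ℕ) + 1 < p := lt_of_le_of_ne (Nat.succ_le_of_lt i.isLt) h
      set i1 : Fin p := ⟨(i : ℕ) + 1, hi1⟩ with hi1def
      have : ∀ k : Fin p, ∑ c : Fin d, companion p d A (i, a) (k, c) * V (k, c) (j, b) =
          if k = i1 then (R j ^ ((i : ℕ) + 1)) a b else 0 := by
        intro k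
        by_cases hk : k = i1
        · subst hk
          simp only [companion, if_neg h, hi1def, if_pos rfl]
          simp [hVdef, vand, Matrix.one_apply]
        · have hk' : ¬ ((k : ℕ) = (i : ℕ) + 1) := by
            intro hc; exact hk (Fin.ext hc)
          simp [companion, if_neg h, hk', hk]
      rw [Finset.sum_congr rfl fun k _ => this k]
      simp
  -- conjugation
  have hVdet : IsUnit V.det := (Matrix.isUnit_iff_isUnit_det V).mp hV
  set u := hV.unit with hu
  have hVu : (u : Matrix (Fin p × Fin d) (Fin p × Fin d) ℂ) = V := hV.unit_spec
  have hVinv : ((u⁻¹ : (Matrix (Fin p × Fin d) (Fin p × Fin d) ℂ)ˣ) :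
      Matrix (Fin p × Fin d) (Fin p × Fin d) ℂ) = V⁻¹ := by
    rw [Matrix.coe_units_inv, hVu]
  have hcomp : (t : ℂ) • companion p d A = (u : Matrix (Fin p × Fin d) (Fin p × Fin d) ℂ) * ((t : ℂ) • D) * ((u⁻¹ : (Matrix (Fin p × Fin d) (Fin p × Fin d) ℂ)ˣ) : Matrix (Fin p × Fin d) (Fin p × Fin d) ℂ) := by
    have h1 : companion p d A = V * D * V⁻¹ := by
      have : companion p d A * V * V⁻¹ = companion p d A := by
        rw [Matrix.mul_assoc, Matrix.mul_nonsing_inv _ hVdet, Matrix.mul_one]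
      rw [← this, key]
    rw [h1, hVu, hVinv, ← smul_mul_assoc, mul_smul_comm]
  have hexp : NormedSpace.exp ((t : ℂ) • companion p d A) =
      V * NormedSpace.exp ((t : ℂ) • D) * V⁻¹ := by
    rw [hcomp, Matrix.exp_units_conj u, hVu, hVinv]
  have hexpD : ∀ x y : Fin p × Fin d,
      NormedSpace.exp ((t : ℂ) • D) x y =
        if x.1 = y.1 then NormedSpace.exp ((t : ℂ) • R y.1) x.2 y.2 else 0 := by
    letI : SeminormedRing (Mat d d) := Matrix.linftyOpSemiNormedRing
    letI : NormedRing (Mat d d) := Matrix.linftyOpNormedRing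
    letI : NormedAlgebra ℂ (Mat d d) := Matrix.linftyOpNormedAlgebra
    letI : NormedAlgebra ℚ (Mat d d) := NormedAlgebra.restrictScalars ℚ ℂ _
    have hsm : (t : ℂ) • D =
        (Matrix.reindex e e) (Matrix.blockDiagonal fun k => (t : ℂ) • R k) := by
      rw [hD]
      ext ⟨i, a⟩ ⟨j, b⟩
      simp [Matrix.reindex_apply, Matrix.submatrix_apply, Matrix.blockDiagonal_apply,
        Matrix.smul_apply, mul_ite]
    rw [hsm, exp_reindex_aux, Matrix.exp_blockDiagonal]
    rintro ⟨i, a⟩ ⟨j, b⟩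
    simp only [Matrix.reindex_apply, Matrix.submatrix_apply, he, Equiv.prodComm_symm,
      Equiv.prodComm_apply, Prod.swap_prod_mk, Matrix.blockDiagonal_apply, Pi.coe_exp]
    by_cases hij : i = j <;> simp [hij]
    exact congrFun (congrFun (Pi.coe_exp (fun k => (t : ℂ) • R k) j) a) b
  -- final entrywise computation
  rw [hexp]
  ext a c
  rw [show Cstar p d * (V * NormedSpace.exp ((t : ℂ) • D) * V⁻¹) * Bstar p d m β =
      (Cstar p d * V) * NormedSpace.exp ((t : ℂ) • D) * (V⁻¹ * Bstar p d m β) by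
    simp only [Matrix.mul_assoc]]
  have hCV : ∀ (a : Fin d) (y : Fin p × Fin d),
      (Cstar p d * V) a y = (1 : Mat d d) a y.2 := by
    rintro a ⟨j, b⟩
    rw [Matrix.mul_apply, Fintype.sum_prod_type]
    have : ∀ k : Fin p, ∑ c : Fin d, Cstar p d a (k, c) * V (k, c) (j, b) =
        if k = (⟨0, hp⟩ : Fin p) then (1 : Mat d d) a b else 0 := by
      intro k
      by_cases hk : k = (⟨0, hp⟩ : Fin p)
      · subst hk
        simp [Cstar, hVdef, vand, Matrix.one_apply]
      · have : ¬ ((k : ℕ) = 0) := fun hc => hk (Fin.ext hc)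
        simp [Cstar, this, hk]
    rw [Finset.sum_congr rfl fun k _ => this k]
    simp
  have hCVE : ∀ (a : Fin d) (y : Fin p × Fin d),
      ((Cstar p d * V) * NormedSpace.exp ((t : ℂ) • D)) a y =
        NormedSpace.exp ((t : ℂ) • R y.1) a y.2 := by
    rintro a ⟨k, b⟩
    rw [Matrix.mul_apply, Fintype.sum_prod_type]
    have : ∀ j : Fin p, ∑ c : Fin d,
        (Cstar p d * V) a (j, c) * NormedSpace.exp ((t : ℂ) • D) (j, c) (k, b) =
        if j = k then NormedSpace.exp ((t : ℂ) • R k) a b else 0 := by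
      intro j
      by_cases hj : j = k
      · subst hj
        simp only [hCV, hexpD, if_pos rfl]
        simp [Matrix.one_apply]
      · rw [if_neg hj]
        refine Finset.sum_eq_zero fun x _ => ?_
        rw [hexpD]
        simp [hj]
    rw [Finset.sum_congr rfl fun j _ => this j]
    simp
  rw [Matrix.mul_apply, Fintype.sum_prod_type]
  rw [Matrix.sum_apply]
  refine Finset.sum_congr rfl fun k _ => ?_
  rw [Matrix.mul_apply]
  refine Finset.sum_congr rfl fun b _ => ?_
  rw [hCVE, hG]
end

section
/- Let p > q ≥ 0, d, m ≥ 1, A(λ) = I_d λ^p + A_1 λ^{p−1} + … + A_p with A_1,…,A_p ∈ ℂ^{d×d}, and B(λ) = B_0 λ^q + … + B_q with B_0,…,B_q ∈ ℂ^{d×m}. Suppose R_1,…,R_p ∈ ℂ^{d×d} are right solvents of A(λ) with σ(A(·)) = ⋃_{k=1}^p σ(R_k) and V(R_1,…,R_p) invertible, and define G_1,…,G_p ∈ ℂ^{d×m} by (G_1^T,…,G_p^T)^T = V(R_1,…,R_p)^{−1} (A^#)^{−1} B^#. Then for every λ ∈ ℂ with det A(λ) ≠ 0, each λ I_d − R_k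 is invertible and A(λ)^{−1} B(λ) = Σ_{k=1}^p (λ I_d − R_k)^{−1} G_k. -/
open Matrix

/-- Evaluation of the monic λ-matrix `A(λ) = I_d λ^p + A_1 λ^{p-1} + … + A_p`,
where `A i` denotes `A_{i+1}`. -/
noncomputable def Apoly (p d : ℕ) (A : Fin p → Mat d d) (z : ℂ) : Mat d d :=
  z ^ p • 1 + ∑ i : Fin p, z ^ (p - 1 - (i : ℕ)) • A i

/-- Evaluation of the λ-matrix `B(λ) = B_0 λ^q + … + B_q`, where `B j` denotes `B_j`. -/
noncomputable def Bpoly (q d m : ℕ) (B : Fin (q + 1) → Mat d m) (z : ℂ) : Mat d m :=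
  ∑ j : Fin (q + 1), z ^ (q - (j : ℕ)) • B j

/-- The lower block-triangular block-Toeplitz matrix `A^#` with blocks `I_d` on the block
diagonal and `A_i` on the `i`-th block subdiagonal, where `A i = A_{i+1}`. -/
def Ahash (p d : ℕ) (A : Fin p → Mat d d) : Matrix (Fin p × Fin d) (Fin p × Fin d) ℂ :=
  fun x y =>
    if x.1 = y.1 then (1 : Mat d d) x.2 y.2
    else if h : (y.1 : ℕ) < (x.1 : ℕ) then
      (A ⟨(x.1 : ℕ) - (y.1 : ℕ) - 1, by have := x.1.isLt; omega⟩) x.2 y.2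
    else 0

/-- The stacked matrix `B^# = (0_{(p-(q+1))d × m}^T, B_0^T, …, B_q^T)^T`. -/
def Bhash (p q d m : ℕ) (B : Fin (q + 1) → Mat d m) : Matrix (Fin p × Fin d) (Fin m) ℂ :=
  fun x c =>
    if h : p - q - 1 ≤ (x.1 : ℕ) then
      B ⟨(x.1 : ℕ) - (p - q - 1), by have := x.1.isLt; omega⟩ x.2 c
    else 0

/-! ### Auxiliary machinery -/

/-- Extended coefficient sequence: `Aext i = A_{i+1}` for `i < p`, `0` otherwise. -/
noncomputable def Aext (p d : ℕ) (A : Fin p → Mat d d) (i : ℕ) : Mat d d :=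
  if h : i < p then A ⟨i, h⟩ else 0

/-- Horner coefficients of the right division of `A(λ)` by `λI - R`. -/
noncomputable def Qc (p d : ℕ) (A : Fin p → Mat d d) (Rk : Mat d d) : ℕ → Mat d d
  | 0 => 1
  | (j+1) => Qc p d A Rk j * Rk + Aext p d A j

lemma Qc_closed (p d : ℕ) (A : Fin p → Mat d d) (Rk : Mat d d) (j : ℕ) :
    Qc p d A Rk j = Rk ^ j + ∑ t ∈ Finset.range j, Aext p d A t * Rk ^ (j - 1 - t) := by
  induction j with
  | zero => simp [Qc]
  | succ n ih =>
    rw [show Qc p d A Rk (n+1) = Qc p d A Rk n * Rk + Aext p d A n from rfl, ih, add_mul,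
      Finset.sum_mul, pow_succ]
    have h1 : ∀ t ∈ Finset.range n,
        Aext p d A t * Rk ^ (n - 1 - t) * Rk = Aext p d A t * Rk ^ (n + 1 - 1 - t) := by
      intro t ht
      rw [mul_assoc, ← pow_succ]
      congr 2
      have := Finset.mem_range.1 ht; omega
    rw [Finset.sum_congr rfl h1, Finset.sum_range_succ, show n + 1 - 1 - n = 0 from by omega,
      pow_zero, mul_one]
    abel

lemma Qc_p_eq_zero (p d : ℕ) (A : Fin p → Mat d d) (Rk : Mat d d)
    (h : IsRightSolvent p d A Rk) : Qc p d A Rk p = 0 := by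
  rw [Qc_closed]
  have e : ∑ t ∈ Finset.range p, Aext p d A t * Rk ^ (p - 1 - t)
      = ∑ i : Fin p, A i * Rk ^ (p - 1 - (i : ℕ)) := by
    rw [← Fin.sum_univ_eq_sum_range (fun t => Aext p d A t * Rk ^ (p - 1 - t)) p]
    exact Finset.sum_congr rfl fun i _ => by simp [Aext, i.isLt]
  rw [e]
  exact h

lemma Qc_div (p d : ℕ) (A : Fin p → Mat d d) (Rk : Mat d d) (z : ℂ) (n : ℕ) :
    (∑ j ∈ Finset.range n, z ^ (n - 1 - j) • Qc p d A Rk j) * (z • (1 : Mat d d) - Rk)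
      = z ^ n • (1 : Mat d d) + (∑ i ∈ Finset.range n, z ^ (n - 1 - i) • Aext p d A i)
        - Qc p d A Rk n := by
  induction n with
  | zero => simp [Qc]
  | succ n ih =>
    have hshift : ∀ (C : ℕ → Mat d d), ∑ j ∈ Finset.range (n+1), z ^ (n - j) • C j
        = z • (∑ j ∈ Finset.range n, z ^ (n - 1 - j) • C j) + C n := by
      intro C
      rw [Finset.sum_range_succ, Nat.sub_self, pow_zero, one_smul, Finset.smul_sum]
      congr 1
      refine Finset.sum_congr rfl fun j hj => ?_
      rw [smul_smul, ← pow_succ']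
      congr 2
      have := Finset.mem_range.1 hj; omega
    simp only [Nat.add_sub_cancel]
    rw [hshift (fun j => Qc p d A Rk j), hshift (fun i => Aext p d A i), add_mul,
      smul_mul_assoc, ih, show Qc p d A Rk (n+1) = Qc p d A Rk n * Rk + Aext p d A n from rfl,
      mul_sub, mul_smul_comm, mul_one, smul_sub, smul_add, smul_smul, ← pow_succ']
    abel

lemma Apoly_factor (p d : ℕ) (A : Fin p → Mat d d) (Rk : Mat d d)
    (h : IsRightSolvent p d A Rk) (z : ℂ) :
    (∑ j ∈ Finset.range p, z ^ (p - 1 - j) • Qc p d A Rk j) * (z • (1 : Mat d d) - Rk)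
      = Apoly p d A z := by
  rw [Qc_div, Qc_p_eq_zero p d A Rk h, sub_zero, Apoly]
  congr 1
  rw [← Fin.sum_univ_eq_sum_range (fun i => z ^ (p - 1 - i) • Aext p d A i) p]
  exact Finset.sum_congr rfl fun i _ => by simp [Aext, i.isLt]

lemma Ahash_det (p d : ℕ) (A : Fin p → Mat d d) : (Ahash p d A).det = 1 := by
  have hbt : (Ahash p d A)ᵀ.BlockTriangular Prod.fst := by
    intro i j hij
    have h1 : (j.1 : ℕ) < (i.1 : ℕ) := hij
    show Ahash p d A j i = 0
    have h2 : ¬ (j.1 = i.1) := fun h => by rw [h] at h1; exact lt_irrefl _ h1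
    have h3 : ¬ ((i.1 : ℕ) < (j.1 : ℕ)) := by omega
    simp only [Ahash]
    rw [if_neg h2, dif_neg h3]
  rw [← Matrix.det_transpose, hbt.det]
  apply Finset.prod_eq_one
  intro k _
  have hblock : (Ahash p d A)ᵀ.toSquareBlock Prod.fst k = 1 := by
    ext x y
    have hx : (x : Fin p × Fin d).1 = k := x.2
    have hy : (y : Fin p × Fin d).1 = k := y.2
    show Ahash p d A (y : Fin p × Fin d) (x : Fin p × Fin d) = (1 : Matrix _ _ ℂ) x y
    simp only [Ahash]
    rw [if_pos (by rw [hx, hy])]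
    by_cases hxy : x = y
    · subst hxy
      rw [Matrix.one_apply_eq, Matrix.one_apply_eq]
    · have hs : (y : Fin p × Fin d).2 ≠ (x : Fin p × Fin d).2 := by
        intro h
        apply hxy
        apply Subtype.ext
        apply Prod.ext
        · rw [hx, hy]
        · exact h.symm
      rw [Matrix.one_apply_ne hs, Matrix.one_apply_ne hxy]
  rw [hblock, Matrix.det_one]

lemma sumF (p d : ℕ) (A : Fin p → Mat d d) (R : Fin p → Mat d d) (jf k : Fin p) :
    (∑ i : Fin p, (if (jf : ℕ) = (i : ℕ) then (1 : Mat d d)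
        else if (i : ℕ) < (jf : ℕ) then Aext p d A ((jf : ℕ) - (i : ℕ) - 1) else 0)
        * R k ^ (i : ℕ))
      = Qc p d A (R k) (jf : ℕ) := by
  rw [Qc_closed]
  rw [Fin.sum_univ_eq_sum_range (fun i => (if (jf : ℕ) = i then (1 : Mat d d)
    else if i < (jf : ℕ) then Aext p d A ((jf : ℕ) - i - 1) else 0) * R k ^ i) p]
  rw [← Finset.sum_subset (Finset.range_subset_range.2 (show (jf : ℕ) + 1 ≤ p from jf.isLt))
    (fun x _ hx => by
      have hx' : (jf : ℕ) < x := by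
        simp only [Finset.mem_range] at hx; omega
      rw [if_neg (by omega), if_neg (by omega), zero_mul])]
  rw [Finset.sum_range_succ, if_pos rfl, one_mul, add_comm]
  congr 1
  rw [← Finset.sum_range_reflect (fun t => Aext p d A t * R k ^ ((jf : ℕ) - 1 - t)) (jf : ℕ)]
  refine Finset.sum_congr rfl fun i hi => ?_
  have hi' := Finset.mem_range.1 hi
  rw [if_neg (by omega), if_pos hi']
  rw [show (jf : ℕ) - i - 1 = (jf : ℕ) - 1 - i from by omega,
    show (jf : ℕ) - 1 - ((jf : ℕ) - 1 - i) = i from by omega]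

lemma mulblock (p d : ℕ) (A : Fin p → Mat d d) (R : Fin p → Mat d d) (jf k : Fin p)
    (a b : Fin d) :
    (Ahash p d A * vand p d R) (jf, a) (k, b) = Qc p d A (R k) (jf : ℕ) a b := by
  rw [Matrix.mul_apply, Fintype.sum_prod_type]
  have step : ∀ i : Fin p, ∑ c : Fin d, Ahash p d A (jf, a) (i, c) * vand p d R (i, c) (k, b)
      = ((if (jf : ℕ) = (i : ℕ) then (1 : Mat d d)
          else if (i : ℕ) < (jf : ℕ) then Aext p d A ((jf : ℕ) - (i : ℕ) - 1) else 0)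
          * R k ^ (i : ℕ)) a b := by
    intro i
    rw [Matrix.mul_apply]
    refine Finset.sum_congr rfl fun c _ => ?_
    have hA : Ahash p d A (jf, a) (i, c)
        = (if (jf : ℕ) = (i : ℕ) then (1 : Mat d d)
          else if (i : ℕ) < (jf : ℕ) then Aext p d A ((jf : ℕ) - (i : ℕ) - 1) else 0) a c := by
      simp only [Ahash]
      by_cases h1 : jf = i
      · subst h1
        rw [if_pos rfl, if_pos rfl]
      · have h1' : ¬ ((jf : ℕ) = (i : ℕ)) := fun h => h1 (Fin.ext h)
        rw [if_neg h1, if_neg h1']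
        by_cases h2 : (i : ℕ) < (jf : ℕ)
        · rw [dif_pos h2, if_pos h2, Aext, dif_pos (show (jf : ℕ) - (i : ℕ) - 1 < p from by
            have := jf.isLt; omega)]
        · rw [dif_neg h2, if_neg h2, Matrix.zero_apply]
    rw [hA]
    rfl
  rw [Finset.sum_congr rfl fun i _ => step i, ← Matrix.sum_apply, sumF]

lemma Bsum (p q d m : ℕ) (hq : q < p) (B : Fin (q + 1) → Mat d m) (z : ℂ) :
    (∑ j : Fin p, z ^ (p - 1 - (j : ℕ)) • (Matrix.of fun a c => Bhash p q d m B (j, a) c))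
      = Bpoly q d m B z := by
  obtain ⟨s, rfl⟩ : ∃ s, p = s + (q + 1) := ⟨p - (q + 1), by omega⟩
  classical
  set Bb : ℕ → Mat d m := fun j =>
    if h : s ≤ j ∧ j < s + (q + 1) then B ⟨j - s, by omega⟩ else 0 with hBb
  have hblk : ∀ j : Fin (s + (q + 1)),
      (Matrix.of fun a c => Bhash (s + (q + 1)) q d m B (j, a) c) = Bb (j : ℕ) := by
    intro j
    ext a c
    simp only [Matrix.of_apply, Bhash, hBb]
    simp only [show s + (q + 1) - q - 1 = s from by omega]
    by_cases hj : s ≤ (j : ℕ)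
    · rw [dif_pos hj, dif_pos ⟨hj, j.isLt⟩]
    · rw [dif_neg hj, dif_neg (by tauto), Matrix.zero_apply]
  rw [Finset.sum_congr rfl fun j _ => by rw [hblk j]]
  rw [Fin.sum_univ_eq_sum_range (fun j => z ^ (s + (q + 1) - 1 - j) • Bb j) (s + (q + 1))]
  rw [Finset.sum_range_add]
  have h0 : ∑ j ∈ Finset.range s, z ^ (s + (q + 1) - 1 - j) • Bb j = 0 := by
    apply Finset.sum_eq_zero
    intro j hj
    have := Finset.mem_range.1 hj
    rw [hBb]
    simp only []
    rw [dif_neg (by omega), smul_zero]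
  rw [h0, zero_add]
  have h1 : ∀ t ∈ Finset.range (q + 1), z ^ (s + (q + 1) - 1 - (s + t)) • Bb (s + t)
      = z ^ (q - t) • Bb (s + t) := by
    intro t ht
    have := Finset.mem_range.1 ht
    rw [show s + (q + 1) - 1 - (s + t) = q - t from by omega]
  rw [Finset.sum_congr rfl h1,
    ← Fin.sum_univ_eq_sum_range (fun t => z ^ (q - t) • Bb (s + t)) (q + 1)]
  rw [Bpoly]
  refine Finset.sum_congr rfl fun t _ => ?_
  rw [hBb]
  simp only []
  rw [dif_pos ⟨Nat.le_add_right _ _, by have := t.isLt; omega⟩]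
  congr 1
  apply congrArg
  ext
  simp

theorem stmt_2 (p q d m : ℕ) (hq : q < p) (hd : 0 < d) (hm : 0 < m)
    (A : Fin p → Mat d d) (B : Fin (q + 1) → Mat d m)
    (R : Fin p → Mat d d) (hR : ∀ k, IsRightSolvent p d A (R k))
    -- `σ(A(·)) = ⋃_{k=1}^p σ(R_k)`
    (hspec : ∀ z : ℂ, det (Apoly p d A z) = 0 ↔
      ∃ k : Fin p, det (z • (1 : Mat d d) - R k) = 0)
    (hV : IsUnit (vand p d R))
    -- `(G_1^T,…,G_p^T)^T = V(R_1,…,R_p)⁻¹ (A^#)⁻¹ B^#`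
    (G : Fin p → Mat d m)
    (hG : ∀ (k : Fin p) (a : Fin d) (c : Fin m),
      G k a c = ((vand p d R)⁻¹ * (Ahash p d A)⁻¹ * Bhash p q d m B) (k, a) c) :
    ∀ z : ℂ, det (Apoly p d A z) ≠ 0 →
      (∀ k : Fin p, IsUnit (z • (1 : Mat d d) - R k)) ∧
      (Apoly p d A z)⁻¹ * Bpoly q d m B z =
        ∑ k : Fin p, (z • (1 : Mat d d) - R k)⁻¹ * G k := by
  intro z hz
  have hdet : IsUnit (Apoly p d A z).det := isUnit_iff_ne_zero.mpr hz
  have hU : ∀ k : Fin p, IsUnit (z • (1 : Mat d d) - R k) := by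
    intro k
    rw [Matrix.isUnit_iff_isUnit_det, isUnit_iff_ne_zero]
    intro h0
    exact hz ((hspec z).2 ⟨k, h0⟩)
  have hUd : ∀ k : Fin p, IsUnit (z • (1 : Mat d d) - R k).det :=
    fun k => (Matrix.isUnit_iff_isUnit_det _).1 (hU k)
  have hVdet : IsUnit (vand p d R).det := (Matrix.isUnit_iff_isUnit_det _).1 hV
  have hMdet : IsUnit (Ahash p d A).det := by rw [Ahash_det]; exact isUnit_one
  have hGs : (Matrix.of fun (y : Fin p × Fin d) c => G y.1 y.2 c)
      = (vand p d R)⁻¹ * (Ahash p d A)⁻¹ * Bhash p q d m B := by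
    ext y c
    exact hG y.1 y.2 c
  have hprod : (Ahash p d A * vand p d R)
      * ((vand p d R)⁻¹ * (Ahash p d A)⁻¹ * Bhash p q d m B) = Bhash p q d m B := by
    rw [Matrix.mul_assoc (vand p d R)⁻¹, Matrix.mul_assoc (Ahash p d A),
      Matrix.mul_nonsing_inv_cancel_left _ _ hVdet,
      Matrix.mul_nonsing_inv_cancel_left _ _ hMdet]
  have hkey2 : ∀ jf : Fin p, (∑ k : Fin p, Qc p d A (R k) (jf : ℕ) * G k)
      = Matrix.of fun a c => Bhash p q d m B (jf, a) c := by
    intro jf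
    ext a c
    rw [Matrix.sum_apply]
    calc ∑ k : Fin p, (Qc p d A (R k) (jf : ℕ) * G k) a c
        = ∑ k : Fin p, ∑ b : Fin d, (Ahash p d A * vand p d R) (jf, a) (k, b)
          * (Matrix.of fun (y : Fin p × Fin d) c => G y.1 y.2 c) (k, b) c := by
          refine Finset.sum_congr rfl fun k _ => ?_
          rw [Matrix.mul_apply]
          exact Finset.sum_congr rfl fun b _ => by rw [mulblock]; rfl
      _ = ∑ y : Fin p × Fin d, (Ahash p d A * vand p d R) (jf, a) y
          * (Matrix.of fun (y : Fin p × Fin d) c => G y.1 y.2 c) y c :=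
          (Fintype.sum_prod_type (fun y : Fin p × Fin d =>
            (Ahash p d A * vand p d R) (jf, a) y
            * (Matrix.of fun (y : Fin p × Fin d) c => G y.1 y.2 c) y c)).symm
      _ = ((Ahash p d A * vand p d R)
          * (Matrix.of fun (y : Fin p × Fin d) c => G y.1 y.2 c)) (jf, a) c :=
          (Matrix.mul_apply).symm
      _ = Bhash p q d m B (jf, a) c := by rw [hGs, hprod]
    done
  have key : Apoly p d A z * (∑ k : Fin p, (z • (1 : Mat d d) - R k)⁻¹ * G k)
      = Bpoly q d m B z := by
    rw [Matrix.mul_sum]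
    have e1 : ∀ k : Fin p, Apoly p d A z * ((z • (1 : Mat d d) - R k)⁻¹ * G k)
        = (∑ j ∈ Finset.range p, z ^ (p - 1 - j) • Qc p d A (R k) j) * G k := by
      intro k
      rw [← Apoly_factor p d A (R k) (hR k) z, Matrix.mul_assoc,
        Matrix.mul_nonsing_inv_cancel_left _ _ (hUd k)]
    have e2 : ∀ k : Fin p, (∑ j ∈ Finset.range p, z ^ (p - 1 - j) • Qc p d A (R k) j) * G k
        = ∑ j ∈ Finset.range p, z ^ (p - 1 - j) • (Qc p d A (R k) j * G k) := by
      intro k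
      rw [Matrix.sum_mul]
      exact Finset.sum_congr rfl fun j _ => Matrix.smul_mul _ _ _
    rw [Finset.sum_congr rfl fun k _ => by rw [e1 k, e2 k]]
    rw [Finset.sum_comm]
    rw [← Fin.sum_univ_eq_sum_range
      (fun j => ∑ k : Fin p, z ^ (p - 1 - j) • (Qc p d A (R k) j * G k)) p]
    have e4 : ∀ jf : Fin p,
        (∑ k : Fin p, z ^ (p - 1 - (jf : ℕ)) • (Qc p d A (R k) (jf : ℕ) * G k))
        = z ^ (p - 1 - (jf : ℕ)) • (Matrix.of fun a c => Bhash p q d m B (jf, a) c) := by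
      intro jf
      rw [← Finset.smul_sum, hkey2 jf]
    rw [Finset.sum_congr rfl fun jf _ => e4 jf]
    exact Bsum p q d m hq B z
  refine ⟨hU, ?_⟩
  conv_lhs => rw [← key]
  rw [Matrix.nonsing_inv_mul_cancel_left _ _ hdet]
end

section
/- Let R_1,…,R_p ∈ ℂ^{d×d} be right solvents of the monic λ-matrix A(λ) = I_d λ^p + A_1 λ^{p−1} + … + A_{p−1} λ + A_p such that the block Vandermonde matrix V(R_1,…,R_p) is invertible (equivalently, R_1,…,R_p form a complete set of regular right solvents). Then the block row of coefficients satisfies [A_p, A_{p−1}, …, A_1] = −[R_1^p, R_2^p, …, R_p^p] V(R_1,…,R_p)^{−1}. -/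
open Matrix

/-- The block row `(R 0 ^ p, …, R (p-1) ^ p)`. -/
def powRow (p d : ℕ) (R : Fin p → Mat d d) : Matrix (Fin d) (Fin p × Fin d) ℂ :=
  fun a y => (R y.1 ^ p) a y.2
theorem stmt_13 (p d : ℕ) (hp : 0 < p) (hd : 0 < d)
    (A : Fin p → Mat d d) (R : Fin p → Mat d d)
    (hR : ∀ k, IsRightSolvent p d A (R k))
    (hV : IsUnit (vand p d R)) :
    -- `[A_p, A_{p-1}, …, A_1] = -[R_1^p, …, R_p^p] V(R_1,…,R_p)⁻¹`: the `j`-th block column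
    -- (0-indexed) of the left-hand side is `A_{p-j}`, i.e. `A j.rev` with `A i = A_{i+1}`
    ∀ (j : Fin p) (a b : Fin d),
      A j.rev a b = (-(powRow p d R * (vand p d R)⁻¹)) a (j, b) := by
  set C : Matrix (Fin d) (Fin p × Fin d) ℂ := fun a y => A y.1.rev a y.2 with hC
  have key : C * vand p d R = -(powRow p d R) := by
    ext a ⟨k, b⟩
    have h := hR k
    unfold IsRightSolvent at h
    have h2 : -(R k ^ p) = ∑ i : Fin p, A i * R k ^ (p - 1 - (i : ℕ)) :=
      neg_eq_of_add_eq_zero_right h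
    have calc1 : (C * vand p d R) a (k, b)
        = ∑ i : Fin p, (A i.rev * R k ^ (i : ℕ)) a b := by
      rw [Matrix.mul_apply, Fintype.sum_prod_type]
      refine Finset.sum_congr rfl fun i _ => ?_
      rw [Matrix.mul_apply]
      rfl
    have reindex : ∑ i : Fin p, A i.rev * R k ^ (i : ℕ)
        = ∑ i : Fin p, A i * R k ^ (p - 1 - (i : ℕ)) := by
      refine Fintype.sum_equiv (Fin.revPerm) _ _ fun i => ?_
      simp only [Fin.revPerm_apply, Fin.rev_rev, Fin.val_rev]
      rw [show p - 1 - (p - ((i:ℕ) + 1)) = (i:ℕ) from by have := i.isLt; omega]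
    rw [calc1, ← Matrix.sum_apply, reindex, ← h2]
    simp [powRow]
  have hdet : IsUnit (vand p d R).det := (Matrix.isUnit_iff_isUnit_det _).mp hV
  have : C = -(powRow p d R * (vand p d R)⁻¹) := by
    calc C = C * (vand p d R * (vand p d R)⁻¹) := by
            rw [Matrix.mul_nonsing_inv _ hdet, Matrix.mul_one]
      _ = (C * vand p d R) * (vand p d R)⁻¹ := by rw [Matrix.mul_assoc]
      _ = -(powRow p d R * (vand p d R)⁻¹) := by rw [key, Matrix.neg_mul]
  intro j a b
  exact congrFun (congrFun this a) (j, b)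
end

section
/- Let A(λ) = I_d λ^p + A_1 λ^{p−1} + … + A_p be a monic λ-matrix of degree p and order d over ℂ, and suppose det A(λ) has pd distinct roots λ_1,…,λ_{pd} ∈ ℂ (latent roots), with corresponding nonzero vectors p_1,…,p_{pd} ∈ ℂ^d satisfying A(λ_i) p_i = 0 (right latent vectors). For k = 1,…,p set P_k := (p_{(k−1)d+1},…,p_{kd}) ∈ ℂ^{d×d} and Λ_k := diag(λ_{(k−1)d+1},…,λ_{kd}), and assume each P_k is invertible. Then R_k := P_k Λ_k P_k^{−1}, k = 1,…,p, form a complete set of regular right solvents of A(λ): each R_k is a right solvent, σ(A(·)) = ⋃_{k=1}^p σ(R_k), the spectra σ(R_1),…,σ(R_p) are pairwise disjoint, and the block Vandermonde matrix V(R_1,…,R_p) is invertible. -/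
open Matrix

/-- The index `(k-1)d + b` (0-indexed) of the `b`-th member of the `k`-th group of `d`
latent roots/vectors. -/
def idx (p d : ℕ) (k : Fin p) (b : Fin d) : Fin (p * d) :=
  ⟨(k : ℕ) * d + (b : ℕ), by
    calc (k : ℕ) * d + (b : ℕ) < (k : ℕ) * d + d := by have := b.isLt; omega
      _ = ((k : ℕ) + 1) * d := by ring
      _ ≤ p * d := Nat.mul_le_mul k.isLt (le_refl d)⟩

/-- `P_k`: the matrix with columns `p_{(k-1)d+1}, …, p_{kd}`. -/
def Pmat (p d : ℕ) (pvec : Fin (p * d) → (Fin d → ℂ)) (k : Fin p) : Mat d d :=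
  fun a b => pvec (idx p d k b) a

/-- `Λ_k = diag(λ_{(k-1)d+1}, …, λ_{kd})`. -/
noncomputable def Lmat (p d : ℕ) (lam : Fin (p * d) → ℂ) (k : Fin p) : Mat d d :=
  Matrix.diagonal (fun b => lam (idx p d k b))

lemma latkey (p d : ℕ) (A : Fin p → Mat d d) (z : ℂ) (v : Fin d → ℂ)
    (h : (Apoly p d A z).mulVec v = 0) (a : Fin d) :
    z ^ p * v a + ∑ j : Fin p, z ^ (p - 1 - (j : ℕ)) * ∑ c, A j a c * v c = 0 := by
  have := congrFun h a
  simp only [Apoly, Matrix.mulVec, dotProduct, Matrix.add_apply, Matrix.sum_apply,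
    Matrix.smul_apply, Matrix.one_apply, smul_eq_mul, Pi.zero_apply, add_mul,
    Finset.sum_add_distrib, mul_ite, mul_one, mul_zero, ite_mul, zero_mul] at this
  rw [← this]
  congr 1
  · simp [Finset.sum_ite_eq' Finset.univ a]
  · simp only [Finset.sum_mul]
    rw [Finset.sum_comm]
    congr 1; ext j
    rw [Finset.mul_sum]
    congr 1; ext c; ring

/-- Block companion map of the monic λ-matrix. -/
noncomputable def Cmap (p d : ℕ) (A : Fin p → Mat d d) :
    ((Fin p × Fin d) → ℂ) →ₗ[ℂ] ((Fin p × Fin d) → ℂ) where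
  toFun x := fun w => if h : (w.1 : ℕ) + 1 < p then x (⟨(w.1 : ℕ) + 1, h⟩, w.2)
    else -∑ j : Fin p, ∑ c, A j w.2 c * x (⟨p - 1 - (j : ℕ), by have := j.isLt; omega⟩, c)
  map_add' x y := by
    funext w; dsimp only [Pi.add_apply]
    split
    · rfl
    · simp only [mul_add, Finset.sum_add_distrib, neg_add]; try ring
  map_smul' s x := by
    funext w; dsimp only [Pi.smul_apply, RingHom.id_apply, smul_eq_mul]
    split
    · rfl
    · simp only [Finset.mul_sum, mul_neg]
      congr 1; congr 1; ext j; congr 1; ext c; ring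

def xvec (p d : ℕ) (z : ℂ) (v : Fin d → ℂ) : (Fin p × Fin d) → ℂ :=
  fun w => z ^ (w.1 : ℕ) * v w.2

lemma xvec_eig (p d : ℕ) (A : Fin p → Mat d d) (z : ℂ) (v : Fin d → ℂ)
    (h : (Apoly p d A z).mulVec v = 0) :
    Cmap p d A (xvec p d z v) = z • xvec p d z v := by
  funext w
  obtain ⟨i, a⟩ := w
  show (if h : (i : ℕ) + 1 < p then _ else _) = _
  split
  · next h' =>
    show z ^ ((i:ℕ)+1) * v a = z • (z ^ (i:ℕ) * v a)
    simp [pow_succ, smul_eq_mul]; ring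
  · next h' =>
    have hi : (i : ℕ) + 1 = p := by have := i.isLt; omega
    have hk := latkey p d A z v h a
    show -∑ j : Fin p, ∑ c, A j a c * (z ^ (p - 1 - (j:ℕ)) * v c)
        = z • (z ^ (i:ℕ) * v a)
    have : ∑ j : Fin p, ∑ c, A j a c * (z ^ (p - 1 - (j:ℕ)) * v c)
        = ∑ j : Fin p, z ^ (p - 1 - (j : ℕ)) * ∑ c, A j a c * v c := by
      congr 1; ext j; rw [Finset.mul_sum]; congr 1; ext c; ring
    rw [this]
    have : z • (z ^ (i:ℕ) * v a) = z ^ p * v a := by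
      rw [smul_eq_mul, ← mul_assoc, ← pow_succ', hi]
    rw [this]
    linear_combination -hk

lemma xvec_ne (p d : ℕ) (hp : 0 < p) (z : ℂ) (v : Fin d → ℂ) (hv : v ≠ 0) :
    xvec p d z v ≠ 0 := by
  obtain ⟨a, ha⟩ := Function.ne_iff.mp hv
  intro h0
  exact ha (by simpa [xvec] using congrFun h0 (⟨0, hp⟩, a))

lemma conj_pow' (d : ℕ) (P L : Mat d d) (hinv : P⁻¹ * P = 1) (hinv' : P * P⁻¹ = 1) (n : ℕ) :
    (P * L * P⁻¹) ^ n = P * L ^ n * P⁻¹ := by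
  induction n with
  | zero => simpa using hinv'.symm
  | succ n ih =>
    rw [pow_succ, ih, pow_succ]
    simp only [Matrix.mul_assoc]
    rw [← Matrix.mul_assoc P⁻¹ P, hinv, Matrix.one_mul]

lemma conj_sub (d : ℕ) (P X : Mat d d) (hinv' : P * P⁻¹ = 1) (z : ℂ) :
    z • (1 : Mat d d) - P * X * P⁻¹ = P * (z • (1 : Mat d d) - X) * P⁻¹ := by
  rw [Matrix.mul_sub, Matrix.sub_mul]
  congr 1
  rw [Matrix.mul_smul, Matrix.mul_one, Matrix.smul_mul, hinv']

lemma idx_quot (p d : ℕ) (hd : 0 < d) (k : Fin p) (b : Fin d) :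
    ((k : ℕ) * d + (b : ℕ)) / d = (k : ℕ) := by
  rw [Nat.mul_comm, Nat.mul_add_div hd, Nat.div_eq_of_lt b.isLt, Nat.add_zero]

lemma idx_inj (p d : ℕ) (hd : 0 < d) {k l : Fin p} {b c : Fin d}
    (h : idx p d k b = idx p d l c) : k = l ∧ b = c := by
  have h' : (k : ℕ) * d + (b : ℕ) = (l : ℕ) * d + (c : ℕ) := congrArg Fin.val h
  have hkl : (k : ℕ) = (l : ℕ) := by
    rw [← idx_quot p d hd k b, ← idx_quot p d hd l c, h']
  refine ⟨Fin.ext hkl, Fin.ext ?_⟩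
  rw [hkl] at h'
  exact Nat.add_left_cancel h'

lemma idx_surj (p d : ℕ) (hd : 0 < d) (i : Fin (p * d)) :
    ∃ k b, idx p d k b = i := by
  refine ⟨⟨(i : ℕ) / d, ?_⟩, ⟨(i : ℕ) % d, Nat.mod_lt _ hd⟩, Fin.ext ?_⟩
  · exact (Nat.div_lt_iff_lt_mul hd).mpr i.isLt
  · show (i : ℕ) / d * d + (i : ℕ) % d = i
    rw [Nat.mul_comm]
    exact Nat.div_add_mod _ _

section main
variable (p d : ℕ) (A : Fin p → Mat d d) (lam : Fin (p * d) → ℂ)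
  (pvec : Fin (p * d) → (Fin d → ℂ))

lemma det_R (k : Fin p) (hPk : IsUnit (Pmat p d pvec k)) (z : ℂ) :
    det (z • (1 : Mat d d) - Pmat p d pvec k * Lmat p d lam k * (Pmat p d pvec k)⁻¹)
      = ∏ b : Fin d, (z - lam (idx p d k b)) := by
  have hinv' : Pmat p d pvec k * (Pmat p d pvec k)⁻¹ = 1 :=
    Matrix.mul_nonsing_inv _ ((Matrix.isUnit_iff_isUnit_det _).mp hPk)
  rw [conj_sub d _ _ hinv', Matrix.det_conj hPk]
  rw [Lmat, Matrix.smul_one_eq_diagonal, Matrix.diagonal_sub, Matrix.det_diagonal]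

lemma solvent_key (k : Fin p) (hPk : IsUnit (Pmat p d pvec k))
    (hlat : ∀ b : Fin d,
      (Apoly p d A (lam (idx p d k b))).mulVec (pvec (idx p d k b)) = 0) :
    (Pmat p d pvec k * Lmat p d lam k * (Pmat p d pvec k)⁻¹) ^ p
      + ∑ i : Fin p, A i *
        (Pmat p d pvec k * Lmat p d lam k * (Pmat p d pvec k)⁻¹) ^ (p - 1 - (i : ℕ)) = 0 := by
  set P := Pmat p d pvec k with hPdef
  set L := Lmat p d lam k with hLdef
  have hdet := (Matrix.isUnit_iff_isUnit_det P).mp hPk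
  have hinv : P⁻¹ * P = 1 := Matrix.nonsing_inv_mul _ hdet
  have hinv' : P * P⁻¹ = 1 := Matrix.mul_nonsing_inv _ hdet
  have hpow := conj_pow' d P L hinv hinv'
  rw [hpow]
  have : ∀ i : Fin p, A i * (P * L ^ (p - 1 - (i : ℕ)) * P⁻¹)
      = (A i * (P * L ^ (p - 1 - (i : ℕ)))) * P⁻¹ := by
    intro i; simp only [Matrix.mul_assoc]
  simp only [hpow, this]
  rw [← Finset.sum_mul, ← Matrix.add_mul]
  have hz : P * L ^ p + ∑ i : Fin p, A i * (P * L ^ (p - 1 - (i : ℕ))) = 0 := by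
    ext a b
    have hk := latkey p d A (lam (idx p d k b)) (pvec (idx p d k b)) (hlat b) a
    simp only [hLdef, Lmat, Matrix.diagonal_pow, ← Matrix.mul_assoc,
      Matrix.add_apply, Matrix.sum_apply, Matrix.mul_diagonal, Matrix.zero_apply,
      Pi.pow_apply]
    simp only [Matrix.mul_apply]
    have e2 : ∀ i : Fin p, (∑ c, A i a c * P c b) * lam (idx p d k b) ^ (p - 1 - (i : ℕ))
        = lam (idx p d k b) ^ (p - 1 - (i : ℕ)) * ∑ c, A i a c * pvec (idx p d k b) c := by
      intro i; rw [mul_comm]; rfl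
    simp only [e2]
    rw [mul_comm (P a b)]
    exact hk
  rw [hz, Matrix.zero_mul]

end main

section vdm
variable (p d : ℕ) (lam : Fin (p * d) → ℂ) (pvec : Fin (p * d) → (Fin d → ℂ))

/-- The confluent matrix `V'` whose column `(j,b)` is `xvec (lam (idx j b)) (pvec (idx j b))`. -/
noncomputable def Vp : Matrix (Fin p × Fin d) (Fin p × Fin d) ℂ :=
  fun x y => xvec p d (lam (idx p d y.1 y.2)) (pvec (idx p d y.1 y.2)) x

/-- Block diagonal with blocks `P_k⁻¹`. -/
noncomputable def Dmat : Matrix (Fin p × Fin d) (Fin p × Fin d) ℂ :=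
  fun x y => if x.1 = y.1 then (Pmat p d pvec x.1)⁻¹ x.2 y.2 else 0

lemma Dmat_isUnit (hP : ∀ k : Fin p, IsUnit (Pmat p d pvec k)) :
    IsUnit (Dmat p d pvec) := by
  set E : Matrix (Fin p × Fin d) (Fin p × Fin d) ℂ :=
    fun x y => if x.1 = y.1 then (Pmat p d pvec x.1) x.2 y.2 else 0 with hE
  have hDE : Dmat p d pvec * E = 1 := by
    ext ⟨j, b⟩ ⟨j', b'⟩
    rw [Matrix.mul_apply, Fintype.sum_prod_type]
    rw [Finset.sum_eq_single j (fun k _ hk => Finset.sum_eq_zero fun c _ => by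
      simp [Dmat, (show ¬ j = k from fun h => hk h.symm)]) (by simp)]
    by_cases hjj : j = j'
    · subst hjj
      have hinv : (Pmat p d pvec j)⁻¹ * Pmat p d pvec j = 1 :=
        Matrix.nonsing_inv_mul _ ((Matrix.isUnit_iff_isUnit_det _).mp (hP j))
      have := congrFun (congrFun hinv b) b'
      simp only [Dmat, hE, if_pos rfl, if_true]
      rw [← Matrix.mul_apply, hinv]
      simp [Matrix.one_apply, Prod.ext_iff]
    · simp [Dmat, hE, hjj, Matrix.one_apply, Prod.ext_iff]
  rw [Matrix.isUnit_iff_isUnit_det]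
  exact Matrix.isUnit_det_of_right_inverse hDE

lemma vand_eq (hP : ∀ k : Fin p, IsUnit (Pmat p d pvec k)) :
    vand p d (fun k => Pmat p d pvec k * Lmat p d lam k * (Pmat p d pvec k)⁻¹)
      = Vp p d lam pvec * Dmat p d pvec := by
  ext ⟨i, a⟩ ⟨j, b⟩
  have hdet := (Matrix.isUnit_iff_isUnit_det (Pmat p d pvec j)).mp (hP j)
  have hinv : (Pmat p d pvec j)⁻¹ * Pmat p d pvec j = 1 := Matrix.nonsing_inv_mul _ hdet
  have hinv' : Pmat p d pvec j * (Pmat p d pvec j)⁻¹ = 1 := Matrix.mul_nonsing_inv _ hdet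
  show ((Pmat p d pvec j * Lmat p d lam j * (Pmat p d pvec j)⁻¹) ^ (i : ℕ)) a b = _
  rw [conj_pow' d _ _ hinv hinv' (i : ℕ)]
  rw [Matrix.mul_apply (M := Pmat p d pvec j * Lmat p d lam j ^ (i : ℕ))]
  rw [Matrix.mul_apply, Fintype.sum_prod_type]
  rw [Finset.sum_eq_single j (fun k _ hk => Finset.sum_eq_zero fun c _ => by
    simp [Dmat, (show ¬ k = j from hk)]) (by simp)]
  congr 1; ext c
  simp only [Vp, Dmat, xvec, if_pos rfl, if_true, Lmat, Matrix.diagonal_pow, Matrix.mul_diagonal,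
    Pmat, Pi.pow_apply]
  ring

end vdm

lemma Vp_isUnit (p d : ℕ) (hp : 0 < p) (hd : 0 < d) (A : Fin p → Mat d d)
    (lam : Fin (p * d) → ℂ) (pvec : Fin (p * d) → (Fin d → ℂ))
    (hdist : Function.Injective lam) (hnz : ∀ i, pvec i ≠ 0)
    (hlat : ∀ i, (Apoly p d A (lam i)).mulVec (pvec i) = 0) :
    IsUnit (Vp p d lam pvec) := by
  rw [← Matrix.linearIndependent_cols_iff_isUnit]
  have heq : (fun y : Fin p × Fin d => (Vp p d lam pvec)ᵀ y)
      = fun y : Fin p × Fin d => xvec p d (lam (idx p d y.1 y.2)) (pvec (idx p d y.1 y.2)) := by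
    funext y x
    rfl
  rw [show (Vp p d lam pvec).col = fun y => (Vp p d lam pvec)ᵀ y from rfl, heq]
  exact Module.End.eigenvectors_linearIndependent' (Cmap p d A)
    (fun y : Fin p × Fin d => lam (idx p d y.1 y.2))
    (fun y y' h => by
      obtain ⟨h1, h2⟩ := idx_inj p d hd (hdist h)
      exact Prod.ext h1 h2)
    _
    (fun y => ⟨Module.End.mem_eigenspace_iff.mpr (xvec_eig p d A _ _ (hlat _)),
      xvec_ne p d hp _ _ (hnz _)⟩)


theorem stmt_15 (p d : ℕ) (hp : 0 < p) (hd : 0 < d)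
    (A : Fin p → Mat d d)
    (lam : Fin (p * d) → ℂ) (pvec : Fin (p * d) → (Fin d → ℂ))
    -- the `λ_i` are `pd` distinct latent roots of `A(λ)` and exhaust all roots of `det A(·)`
    (hdist : Function.Injective lam)
    (hroot : ∀ i, det (Apoly p d A (lam i)) = 0)
    (hall : ∀ z : ℂ, det (Apoly p d A z) = 0 → ∃ i, z = lam i)
    -- the `p_i` are nonzero right latent vectors: `A(λ_i) p_i = 0`
    (hnz : ∀ i, pvec i ≠ 0)
    (hlat : ∀ i, (Apoly p d A (lam i)).mulVec (pvec i) = 0)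
    -- each `P_k` is invertible
    (hP : ∀ k : Fin p, IsUnit (Pmat p d pvec k)) :
    -- then `R_k := P_k Λ_k P_k⁻¹` form a complete set of regular right solvents:
    (∀ k : Fin p,
      IsRightSolvent p d A (Pmat p d pvec k * Lmat p d lam k * (Pmat p d pvec k)⁻¹)) ∧
    -- `σ(A(·)) = ⋃_k σ(R_k)`
    (∀ z : ℂ, det (Apoly p d A z) = 0 ↔
      ∃ k : Fin p, det (z • (1 : Mat d d) -
        Pmat p d pvec k * Lmat p d lam k * (Pmat p d pvec k)⁻¹) = 0) ∧
    -- the spectra `σ(R_k)` are pairwise disjoint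
    (∀ k l : Fin p, k ≠ l → ∀ z : ℂ,
      ¬(det (z • (1 : Mat d d) -
          Pmat p d pvec k * Lmat p d lam k * (Pmat p d pvec k)⁻¹) = 0 ∧
        det (z • (1 : Mat d d) -
          Pmat p d pvec l * Lmat p d lam l * (Pmat p d pvec l)⁻¹) = 0)) ∧
    -- and the block Vandermonde matrix is invertible
    IsUnit (vand p d (fun k => Pmat p d pvec k * Lmat p d lam k * (Pmat p d pvec k)⁻¹)) := by
  refine ⟨?_, ?_, ?_, ?_⟩
  · intro k
    exact solvent_key p d A lam pvec k (hP k) (fun b => hlat _)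
  · intro z
    constructor
    · intro hz
      obtain ⟨i, rfl⟩ := hall z hz
      obtain ⟨k, b, rfl⟩ := idx_surj p d hd i
      exact ⟨k, by
        rw [det_R p d lam pvec k (hP k)]
        exact Finset.prod_eq_zero (Finset.mem_univ b) (sub_self _)⟩
    · rintro ⟨k, hk⟩
      rw [det_R p d lam pvec k (hP k)] at hk
      obtain ⟨b, _, hb⟩ := Finset.prod_eq_zero_iff.mp hk
      rw [sub_eq_zero] at hb
      rw [hb]
      exact hroot _
  · rintro k l hkl z ⟨h1, h2⟩
    rw [det_R p d lam pvec k (hP k)] at h1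
    rw [det_R p d lam pvec l (hP l)] at h2
    obtain ⟨b, _, hb⟩ := Finset.prod_eq_zero_iff.mp h1
    obtain ⟨c, _, hc⟩ := Finset.prod_eq_zero_iff.mp h2
    rw [sub_eq_zero] at hb hc
    exact hkl (idx_inj p d hd (hdist (hb.symm.trans hc))).1
  · rw [vand_eq p d lam pvec hP]
    exact (Vp_isUnit p d hp hd A lam pvec hdist hnz hlat).mul (Dmat_isUnit p d pvec hP)
end
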